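/- arXiv:2512.14624 — 2 statements merged into one kernel-verified Lean document; each statement's English description precedes it below -/
import Mathlib

section
/- If Y₁,…,Yₙ are i.i.d. Bernoulli(p) random variables with p ∈ (0,1) and Ȳ := n⁻¹∑ᵢYᵢ, then for every ε > 0, P(kl₊(Ȳ, p) ≥ ε) ≤ e^{−nε}, where kl₊(p',q) := 𝟙{p'>q}·kl(p',q). -/
open Real

/-- The Bernoulli Kullback–Leibler divergence `kl : [0,1] × [0,1] → [0,∞]`, with the
conventions `kl(0,q) = −log(1−q)`, `kl(1,q) = −log q`, and the value `∞` when a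
logarithm of zero would occur. -/
noncomputable def bernKL (p q : ℝ) : EReal :=
  if p = 0 then (if q = 1 then ⊤ else ((-Real.log (1 - q) : ℝ) : EReal))
  else if p = 1 then (if q = 0 then ⊤ else ((-Real.log q : ℝ) : EReal))
  else if q = 0 ∨ q = 1 then ⊤
  else ((p * Real.log (p / q) + (1 - p) * Real.log ((1 - p) / (1 - q)) : ℝ) : EReal)


/-- `kl₊(p,q) := kl(p,q)` if `p > q`, and `0` otherwise. -/
noncomputable def bernKLplus (p q : ℝ) : EReal :=
  if q < p then bernKL p q else 0

open MeasureTheory in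
/-- The Bernoulli(p) distribution, as a measure on `ℝ` putting mass `p` at `1`
and mass `1−p` at `0`. -/
noncomputable def bernoulliMeasure (p : ℝ) : Measure ℝ :=
  ENNReal.ofReal p • Measure.dirac 1 + ENNReal.ofReal (1 - p) • Measure.dirac 0

/-! ### Auxiliary lemmas -/

noncomputable def gfun (p x : ℝ) : ℝ :=
  x * Real.log x - x * Real.log p + (1 - x) * Real.log (1 - x) - (1 - x) * Real.log (1 - p)

lemma gfun_continuous (p : ℝ) : Continuous (gfun p) := by
  unfold gfun
  have h1 : Continuous fun x : ℝ => x * Real.log x := Real.continuous_mul_log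
  have h2 : Continuous fun x : ℝ => (1 - x) * Real.log (1 - x) :=
    h1.comp (continuous_const.sub continuous_id)
  continuity

lemma gfun_hasDerivAt {p x : ℝ} (hx : 0 < x) (hx1 : x < 1) :
    HasDerivAt (gfun p) (Real.log x - Real.log p - (Real.log (1 - x) - Real.log (1 - p))) x := by
  have h1 : HasDerivAt (fun x : ℝ => x * Real.log x) (Real.log x + 1) x :=
    Real.hasDerivAt_mul_log hx.ne'
  have h2 : HasDerivAt (fun x : ℝ => (1 - x) * Real.log (1 - x))
      (-(Real.log (1 - x) + 1)) x := by
    have := (Real.hasDerivAt_mul_log (x := 1 - x) (by linarith)).comp x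
      ((hasDerivAt_const x (1:ℝ)).sub (hasDerivAt_id x))
    simpa [Function.comp_def] using this
  have h3 : HasDerivAt (fun x : ℝ => x * Real.log p) (Real.log p) x := by
    simpa using (hasDerivAt_id x).mul_const (Real.log p)
  have h4 : HasDerivAt (fun x : ℝ => (1 - x) * Real.log (1 - p)) (-Real.log (1 - p)) x := by
    simpa using ((hasDerivAt_const x (1:ℝ)).sub (hasDerivAt_id x)).mul_const (Real.log (1 - p))
  have := ((h1.sub h3).add h2).sub h4
  have h5 : HasDerivAt (gfun p)
      (Real.log x + 1 - Real.log p + -(Real.log (1 - x) + 1) - -Real.log (1 - p)) x := this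
  convert h5 using 1; ring

lemma gfun_strictMonoOn {p : ℝ} (hp : 0 < p) (hp1 : p < 1) :
    StrictMonoOn (gfun p) (Set.Icc p 1) := by
  apply strictMonoOn_of_deriv_pos (convex_Icc p 1) ((gfun_continuous p).continuousOn)
  intro x hx
  rw [interior_Icc] at hx
  obtain ⟨hxa, hxb⟩ := hx
  have hx0 : 0 < x := lt_trans hp hxa
  rw [(gfun_hasDerivAt hx0 hxb).deriv]
  have h1 : Real.log p < Real.log x := Real.log_lt_log hp hxa
  have h2 : Real.log (1 - x) < Real.log (1 - p) := Real.log_lt_log (by linarith) (by linarith)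
  linarith

lemma gfun_self {p : ℝ} : gfun p p = 0 := by unfold gfun; ring

lemma gfun_one {p : ℝ} : gfun p 1 = -Real.log p := by
  unfold gfun; simp

lemma bernKL_eq_gfun {p x : ℝ} (hp : 0 < p) (hp1 : p < 1) (hx : p < x) (hx1 : x ≤ 1) :
    bernKL x p = ((gfun p x : ℝ) : EReal) := by
  have hx0 : (0:ℝ) < x := lt_trans hp hx
  rcases eq_or_lt_of_le hx1 with h1 | h1
  · subst h1
    rw [bernKL, if_neg (by norm_num), if_pos rfl, if_neg hp.ne', gfun_one]
  · rw [bernKL, if_neg hx0.ne', if_neg (by linarith),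
      if_neg (by push_neg; exact ⟨hp.ne', by linarith⟩)]
    congr 1
    rw [Real.log_div hx0.ne' hp.ne', Real.log_div (by linarith) (by linarith)]
    unfold gfun; ring

open MeasureTheory in
lemma integrable_bern {p : ℝ} (hp : 0 < p) (hp1 : p < 1) (f : ℝ → ℝ) :
    Integrable f (bernoulliMeasure p) := by
  have h1 : Integrable f (Measure.dirac (1:ℝ)) := by
    refine (integrable_const (f 1)).congr ?_
    rw [MeasureTheory.ae_dirac_eq]
    exact Filter.eventually_pure.2 rfl
  have h0 : Integrable f (Measure.dirac (0:ℝ)) := by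
    refine (integrable_const (f 0)).congr ?_
    rw [MeasureTheory.ae_dirac_eq]
    exact Filter.eventually_pure.2 rfl
  exact ((integrable_smul_measure (by simp [hp.le, hp]) (by simp)).mpr h1).add_measure
    ((integrable_smul_measure (by simp; linarith) (by simp)).mpr h0)

open MeasureTheory in
lemma integral_bern {p : ℝ} (hp : 0 < p) (hp1 : p < 1) (f : ℝ → ℝ) :
    ∫ x, f x ∂(bernoulliMeasure p) = p * f 1 + (1 - p) * f 0 := by
  have h1 : Integrable f (Measure.dirac (1:ℝ)) := by
    refine (integrable_const (f 1)).congr ?_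
    rw [MeasureTheory.ae_dirac_eq]; exact Filter.eventually_pure.2 rfl
  have h0 : Integrable f (Measure.dirac (0:ℝ)) := by
    refine (integrable_const (f 0)).congr ?_
    rw [MeasureTheory.ae_dirac_eq]; exact Filter.eventually_pure.2 rfl
  rw [bernoulliMeasure, integral_add_measure
      ((integrable_smul_measure (by simp [hp.le, hp]) (by simp)).mpr h1)
      ((integrable_smul_measure (by simp; linarith) (by simp)).mpr h0),
    integral_smul_measure, integral_smul_measure,
    integral_dirac, integral_dirac, ENNReal.toReal_ofReal hp.le,
    ENNReal.toReal_ofReal (by linarith)]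
  simp

open MeasureTheory in
lemma bern_compl {p : ℝ} :
    bernoulliMeasure p (({0, 1} : Set ℝ)ᶜ) = 0 := by
  have hm : MeasurableSet (({0, 1} : Set ℝ)ᶜ) := by measurability
  rw [bernoulliMeasure]
  simp only [Measure.add_apply, Measure.smul_apply, smul_eq_mul]
  rw [Measure.dirac_apply' _ hm, Measure.dirac_apply' _ hm]
  simp

open MeasureTheory ProbabilityTheory in
lemma chernoff_aux {Ω : Type*} [MeasurableSpace Ω] (μ : Measure Ω)
    [IsProbabilityMeasure μ] (n : ℕ) (p : ℝ) (hp : p ∈ Set.Ioo (0:ℝ) 1)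
    (Y : Fin n → Ω → ℝ) (hmeas : ∀ i, Measurable (Y i))
    (hindep : iIndepFun Y μ)
    (hdist : ∀ i, μ.map (Y i) = _root_.bernoulliMeasure p)
    (a : ℝ) (hpa : p < a) (ha1 : a < 1) :
    μ {ω | (n:ℝ) * a ≤ ∑ i, Y i ω} ≤ ENNReal.ofReal (Real.exp (-((n:ℝ) * gfun p a))) := by
  obtain ⟨hp0, hp1⟩ := hp
  have ha0 : 0 < a := lt_trans hp0 hpa
  set t : ℝ := Real.log (a * (1 - p) / (p * (1 - a))) with ht_def
  have harg : (0:ℝ) < a * (1 - p) / (p * (1 - a)) := by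
    apply div_pos <;> nlinarith
  have ht : 0 < t := by
    apply Real.log_pos
    rw [lt_div_iff₀ (by nlinarith)]
    nlinarith
  have hexp : Real.exp t = a * (1 - p) / (p * (1 - a)) := Real.exp_log harg
  have hB : p * Real.exp t + (1 - p) = (1 - p) / (1 - a) := by
    have h1 : p * (1 - a) ≠ 0 := by nlinarith
    have h2 : (1 - a) ≠ (0:ℝ) := by intro h; rw [h] at h1; simp at h1
    rw [hexp]
    field_simp
    ring
  have hBpos : (0:ℝ) < (1 - p) / (1 - a) := by apply div_pos <;> linarith
  -- integrability of each exp(t * Y i)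
  have hint : ∀ i, Integrable (fun ω => Real.exp (t * Y i ω)) μ := by
    intro i
    have hg : Measurable fun x : ℝ => Real.exp (t * x) := (measurable_id.const_mul t).exp
    have : Integrable (fun x : ℝ => Real.exp (t * x)) (μ.map (Y i)) := by
      rw [hdist i]; exact integrable_bern hp0 hp1 _
    exact (integrable_map_measure hg.aestronglyMeasurable (hmeas i).aemeasurable).mp this
  have hmgf : ∀ i, mgf (Y i) μ t = (1 - p) / (1 - a) := by
    intro i
    have hg : Measurable fun x : ℝ => Real.exp (t * x) := (measurable_id.const_mul t).exp
    rw [mgf]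
    calc ∫ ω, Real.exp (t * Y i ω) ∂μ
        = ∫ x, Real.exp (t * x) ∂(μ.map (Y i)) :=
          (integral_map (hmeas i).aemeasurable hg.aestronglyMeasurable).symm
      _ = p * Real.exp (t * 1) + (1 - p) * Real.exp (t * 0) := by
          rw [hdist i]; exact integral_bern hp0 hp1 _
      _ = (1 - p) / (1 - a) := by rw [mul_one, mul_zero, Real.exp_zero, ← hB]; ring
  have hintsum : Integrable (fun ω => Real.exp (t * (∑ i, Y i) ω)) μ :=
    hindep.integrable_exp_mul_sum hmeas (fun i _ => hint i)
  have key := measure_ge_le_exp_mul_mgf (μ := μ) (X := ∑ i, Y i) ((n:ℝ) * a) ht.le hintsum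
  rw [hindep.mgf_sum hmeas] at key
  simp only [hmgf, Finset.prod_const, Finset.card_univ, Fintype.card_fin] at key
  have hset : {ω | (n:ℝ) * a ≤ ∑ i, Y i ω} = {ω | (n:ℝ) * a ≤ (∑ i, Y i) ω} := by
    ext ω; simp [Finset.sum_apply]
  have hrhs : Real.exp (-t * ((n:ℝ) * a)) * ((1 - p) / (1 - a)) ^ n
      = Real.exp (-((n:ℝ) * gfun p a)) := by
    have hlogB : Real.log ((1 - p) / (1 - a)) = Real.log (1 - p) - Real.log (1 - a) :=
      Real.log_div (by linarith) (by linarith)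
    have ht_eq : t = Real.log a + Real.log (1 - p) - Real.log p - Real.log (1 - a) := by
      rw [ht_def, Real.log_div (ne_of_gt (by nlinarith)) (ne_of_gt (by nlinarith)),
        Real.log_mul ha0.ne' (by linarith), Real.log_mul hp0.ne' (by linarith)]
      ring
    have hpow : ((1 - p) / (1 - a)) ^ n = Real.exp ((n:ℝ) * Real.log ((1 - p) / (1 - a))) := by
      rw [Real.exp_nat_mul, Real.exp_log hBpos]
    rw [hpow, ← Real.exp_add]
    congr 1
    rw [hlogB, ht_eq]
    unfold gfun; ring
  rw [hset]
  calc μ {ω | (n:ℝ) * a ≤ (∑ i, Y i) ω}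
      = ENNReal.ofReal ((μ {ω | (n:ℝ) * a ≤ (∑ i, Y i) ω}).toReal) := by
        rw [ENNReal.ofReal_toReal (measure_ne_top μ _)]
    _ ≤ ENNReal.ofReal (Real.exp (-((n:ℝ) * gfun p a))) := by
        apply ENNReal.ofReal_le_ofReal
        rw [← hrhs]; exact key

open MeasureTheory ProbabilityTheory in
/-- If `Y₁,…,Yₙ` are i.i.d. `Bernoulli(p)` with `p ∈ (0,1)` and `Ȳ := n⁻¹ ∑ᵢ Yᵢ`, then for
every `ε > 0`, `P(kl₊(Ȳ, p) ≥ ε) ≤ exp(−nε)`. -/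
theorem bernKLplus_concentration {Ω : Type*} [MeasurableSpace Ω] (μ : Measure Ω)
    [IsProbabilityMeasure μ] (n : ℕ) (hn : 0 < n) (p : ℝ) (hp : p ∈ Set.Ioo (0:ℝ) 1)
    (Y : Fin n → Ω → ℝ) (hmeas : ∀ i, Measurable (Y i))
    (hindep : iIndepFun Y μ)
    (hdist : ∀ i, μ.map (Y i) = _root_.bernoulliMeasure p)
    (ε : ℝ) (hε : 0 < ε) :
    μ {ω | ((ε : ℝ) : EReal) ≤ bernKLplus ((∑ i, Y i ω) / n) p} ≤
      ENNReal.ofReal (Real.exp (-(n * ε))) := by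
  obtain ⟨hp0, hp1⟩ := hp
  have hnpos : (0:ℝ) < n := by exact_mod_cast hn
  set E : Set Ω := {ω | ((ε : ℝ) : EReal) ≤ bernKLplus ((∑ i, Y i ω) / n) p} with hE_def
  set N : Set Ω := ⋃ i, Y i ⁻¹' (({0, 1} : Set ℝ)ᶜ) with hN_def
  have hmN : MeasurableSet (({0, 1} : Set ℝ)ᶜ) := by measurability
  have hN : μ N = 0 := by
    apply measure_iUnion_null
    intro i
    rw [← Measure.map_apply (hmeas i) hmN, hdist i, bern_compl]
  -- facts on E \ N
  have hEN : ∀ ω ∈ E \ N, p < (∑ i, Y i ω) / n ∧ (∑ i, Y i ω) / n ≤ 1 ∧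
      ε ≤ gfun p ((∑ i, Y i ω) / n) := by
    intro ω hω
    obtain ⟨hωE, hωN⟩ := hω
    have hvals : ∀ i, Y i ω = 0 ∨ Y i ω = 1 := by
      intro i
      by_contra hcon
      push_neg at hcon
      exact hωN (Set.mem_iUnion.2 ⟨i, by simp [hcon.1, hcon.2]⟩)
    have hYle : (∑ i, Y i ω) / n ≤ 1 := by
      rw [div_le_one hnpos]
      calc ∑ i, Y i ω ≤ ∑ _i : Fin n, (1:ℝ) := by
            apply Finset.sum_le_sum
            intro i _
            rcases hvals i with h | h <;> rw [h] <;> norm_num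
        _ = n := by simp
    have hplt : p < (∑ i, Y i ω) / n := by
      by_contra hcon
      have : bernKLplus ((∑ i, Y i ω) / n) p = 0 := if_neg hcon
      rw [hE_def, Set.mem_setOf_eq, this] at hωE
      have : ε ≤ (0:ℝ) := by exact_mod_cast hωE
      linarith
    refine ⟨hplt, hYle, ?_⟩
    have heq : bernKLplus ((∑ i, Y i ω) / n) p = ((gfun p ((∑ i, Y i ω) / n) : ℝ) : EReal) := by
      rw [bernKLplus, if_pos hplt, bernKL_eq_gfun hp0 hp1 hplt hYle]
    rw [hE_def, Set.mem_setOf_eq, heq] at hωE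
    exact_mod_cast hωE
  have hEsub : μ E ≤ μ (E \ N) := by
    have hsub : E ⊆ (E \ N) ∪ N := by
      intro ω hω
      by_cases h : ω ∈ N
      · exact Or.inr h
      · exact Or.inl ⟨hω, h⟩
    calc μ E ≤ μ ((E \ N) ∪ N) := measure_mono hsub
      _ ≤ μ (E \ N) + μ N := measure_union_le _ _
      _ = μ (E \ N) := by rw [hN, add_zero]
  by_cases hcase : ε ≤ -Real.log p
  · -- main case: use Chernoff at level ε - η, then let η → 0⁺
    have hbound : ∀ η ∈ Set.Ioo (0:ℝ) ε,
        μ E ≤ ENNReal.ofReal (Real.exp (-((n:ℝ) * (ε - η)))) := by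
      intro η hη
      obtain ⟨hη0, hηε⟩ := hη
      -- IVT: find a with gfun p a = ε - η
      have hcont : ContinuousOn (gfun p) (Set.Icc p 1) := (gfun_continuous p).continuousOn
      have hiv : ε - η ∈ Set.Icc (gfun p p) (gfun p 1) := by
        rw [gfun_self, gfun_one]
        constructor <;> linarith
      obtain ⟨a, haI, ha⟩ := intermediate_value_Icc (le_of_lt hp1) hcont hiv
      have hpa : p < a := by
        rcases eq_or_lt_of_le haI.1 with h | h
        · exfalso; rw [← h, gfun_self] at ha; linarith
        · exact h
      have ha1 : a < 1 := by
        rcases eq_or_lt_of_le haI.2 with h | h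
        · exfalso; rw [h, gfun_one] at ha; linarith
        · exact h
      have hsub2 : E \ N ⊆ {ω | (n:ℝ) * a ≤ ∑ i, Y i ω} := by
        intro ω hω
        obtain ⟨h1, h2, h3⟩ := hEN ω hω
        have haY : a ≤ (∑ i, Y i ω) / n := by
          by_contra hcon
          push_neg at hcon
          have := gfun_strictMonoOn hp0 hp1 ⟨le_of_lt h1, h2⟩ ⟨le_of_lt hpa, le_of_lt ha1⟩ hcon
          rw [ha] at this
          linarith
        have h4 : a * n ≤ ∑ i, Y i ω := (le_div_iff₀ hnpos).mp haY
        simp only [Set.mem_setOf_eq]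
        linarith
      calc μ E ≤ μ (E \ N) := hEsub
        _ ≤ μ {ω | (n:ℝ) * a ≤ ∑ i, Y i ω} := measure_mono hsub2
        _ ≤ ENNReal.ofReal (Real.exp (-((n:ℝ) * gfun p a))) :=
            chernoff_aux μ n p ⟨hp0, hp1⟩ Y hmeas hindep hdist a hpa ha1
        _ = ENNReal.ofReal (Real.exp (-((n:ℝ) * (ε - η)))) := by rw [ha]
    -- take the limit η → 0⁺
    have htend : Filter.Tendsto (fun η : ℝ => ENNReal.ofReal (Real.exp (-((n:ℝ) * (ε - η)))))
        (nhdsWithin 0 (Set.Ioi 0)) (nhds (ENNReal.ofReal (Real.exp (-((n:ℝ) * ε))))) := by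
      have hc : Continuous fun η : ℝ => ENNReal.ofReal (Real.exp (-((n:ℝ) * (ε - η)))) := by
        apply ENNReal.continuous_ofReal.comp
        continuity
      have := hc.tendsto 0
      simp only [sub_zero] at this
      exact this.mono_left nhdsWithin_le_nhds
    have hev : ∀ᶠ η in nhdsWithin (0:ℝ) (Set.Ioi 0),
        μ E ≤ ENNReal.ofReal (Real.exp (-((n:ℝ) * (ε - η)))) := by
      filter_upwards [Ioo_mem_nhdsGT_of_mem (Set.mem_Ico.2 ⟨le_refl 0, hε⟩)] with η hη
      exact hbound η hη
    exact ge_of_tendsto htend hev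
  · -- degenerate case: the event is null
    push_neg at hcase
    have hempty : E \ N = ∅ := by
      rw [Set.eq_empty_iff_forall_notMem]
      intro ω hω
      obtain ⟨h1, h2, h3⟩ := hEN ω hω
      have hmono := (gfun_strictMonoOn hp0 hp1).monotoneOn ⟨le_of_lt h1, h2⟩
        ⟨le_of_lt hp1, le_refl 1⟩ h2
      rw [gfun_one] at hmono
      linarith
    calc μ E ≤ μ (E \ N) := hEsub
      _ = 0 := by rw [hempty, measure_empty]
      _ ≤ _ := zero_le
end

section
/- If Y₁,…,Yₙ are i.i.d. Bernoulli(p) random variables with p ∈ (0,1) and Ȳ := n⁻¹∑ᵢYᵢ, then for every ε > 0, P(kl(Ȳ, p) ≥ ε) ≤ 2e^{−nε}. -/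
open Real

open MeasureTheory ProbabilityTheory

noncomputable def klR (t q : ℝ) : ℝ :=
  t * Real.log (t / q) + (1 - t) * Real.log ((1 - t) / (1 - q))

noncomputable def klG (q t : ℝ) : ℝ :=
  t * Real.log t + (1 - t) * Real.log (1 - t) - t * Real.log q - (1 - t) * Real.log (1 - q)

lemma bernKL_eq {p : ℝ} (hp : p ∈ Set.Ioo (0:ℝ) 1) (t : ℝ) :
    bernKL t p = ((klR t p : ℝ) : EReal) := by
  obtain ⟨hp0, hp1⟩ := hp
  unfold bernKL klR
  rcases eq_or_ne t 0 with rfl | ht0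
  · simp [hp1.ne, div_eq_mul_inv, Real.log_inv]
  rcases eq_or_ne t 1 with rfl | ht1
  · simp [hp0.ne', div_eq_mul_inv, Real.log_inv]
  simp [ht0, ht1, hp0.ne', hp1.ne]

lemma klR_eq_klG {q : ℝ} (hq0 : q ≠ 0) (hq1 : q ≠ 1) {t : ℝ} (ht0 : 0 ≤ t) (ht1 : t ≤ 1) :
    klR t q = klG q t := by
  unfold klR klG
  rcases eq_or_ne t 0 with rfl | h0
  · simp [div_eq_mul_inv, Real.log_inv, Real.log_mul, sub_ne_zero.2 (Ne.symm hq1)]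
  rcases eq_or_ne t 1 with rfl | h1
  · simp [Real.log_div one_ne_zero hq0]
  · rw [Real.log_div h0 hq0, Real.log_div (sub_ne_zero.2 (Ne.symm h1)) (sub_ne_zero.2 (Ne.symm hq1))]
    ring

lemma continuous_klG (q : ℝ) : Continuous (klG q) := by
  unfold klG
  have h1 : Continuous fun t : ℝ => t * Real.log t := Real.continuous_mul_log
  have h2 : Continuous fun t : ℝ => (1 - t) * Real.log (1 - t) :=
    Real.continuous_mul_log.comp (continuous_const.sub continuous_id)
  fun_prop

lemma klR_symm (t q : ℝ) : klR (1 - t) (1 - q) = klR t q := by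
  simp only [klR, sub_sub_cancel]
  ring

lemma klG_one {q : ℝ} : klG q 1 = -Real.log q := by simp [klG]
lemma integrable_dirac_my {f : ℝ → ℝ} (a : ℝ) : Integrable f (Measure.dirac a) :=
  (integrable_const (f a)).congr (ae_eq_dirac f).symm

lemma integrable_bern_s6 {q : ℝ} (f : ℝ → ℝ) : Integrable f (_root_.bernoulliMeasure q) :=
  ((integrable_dirac_my 1).smul_measure ENNReal.ofReal_ne_top).add_measure
    ((integrable_dirac_my 0).smul_measure ENNReal.ofReal_ne_top)

lemma integral_bern_s6 {q : ℝ} (hq0 : 0 ≤ q) (hq1 : q ≤ 1) (f : ℝ → ℝ) :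
    ∫ x, f x ∂(_root_.bernoulliMeasure q) = q * f 1 + (1 - q) * f 0 := by
  unfold _root_.bernoulliMeasure
  rw [integral_add_measure ((integrable_dirac_my 1).smul_measure ENNReal.ofReal_ne_top)
      ((integrable_dirac_my 0).smul_measure ENNReal.ofReal_ne_top),
    integral_smul_measure, integral_smul_measure, integral_dirac, integral_dirac,
    ENNReal.toReal_ofReal hq0, ENNReal.toReal_ofReal (by linarith)]
  simp [smul_eq_mul]

lemma bern_chernoff {Ω : Type*} [MeasurableSpace Ω] (μ : Measure Ω)
    [IsProbabilityMeasure μ] (n : ℕ) (hn : 0 < n) (q : ℝ) (hq : q ∈ Set.Ioo (0:ℝ) 1)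
    (Y : Fin n → Ω → ℝ) (hmeas : ∀ i, Measurable (Y i))
    (hindep : iIndepFun Y μ)
    (hdist : ∀ i, μ.map (Y i) = _root_.bernoulliMeasure q)
    (a : ℝ) (haq : q ≤ a) (ha1 : a < 1) :
    μ {ω | a ≤ (∑ i, Y i ω) / n} ≤ ENNReal.ofReal (Real.exp (-(n * klR a q))) := by
  obtain ⟨hq0, hq1⟩ := hq
  have ha0 : 0 < a := hq0.trans_le haq
  have h1a : 0 < 1 - a := by linarith
  have h1q : 0 < 1 - q := by linarith
  have hnR : (0:ℝ) < n := by exact_mod_cast hn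
  set t : ℝ := Real.log (a * (1 - q) / (q * (1 - a))) with ht_def
  have hpos : 0 < a * (1 - q) / (q * (1 - a)) := by positivity
  have hratio : 1 ≤ a * (1 - q) / (q * (1 - a)) := by
    rw [le_div_iff₀ (by positivity)]
    nlinarith
  have ht : 0 ≤ t := Real.log_nonneg hratio
  have hexp : Real.exp t = a * (1 - q) / (q * (1 - a)) := Real.exp_log hpos
  -- integrability of exp (t * Y i)
  have h_int : ∀ i, Integrable (fun ω => Real.exp (t * Y i ω)) μ := by
    intro i
    have h1 : Integrable (fun x => Real.exp (t * x)) (μ.map (Y i)) := by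
      rw [hdist i]; exact integrable_bern_s6 _
    exact (integrable_map_measure
      (by rw [hdist i]; exact (measurable_const_mul t).exp.aestronglyMeasurable)
      (hmeas i).aemeasurable).mp h1
  have h_int_sum : Integrable (fun ω => Real.exp (t * (∑ i, Y i) ω)) μ :=
    hindep.integrable_exp_mul_sum hmeas (fun i _ => h_int i)
  have key := measure_ge_le_exp_mul_mgf (X := ∑ i, Y i) (μ := μ) (a * n) ht h_int_sum
  have hmgf_i : ∀ i, mgf (Y i) μ t = q * Real.exp t + (1 - q) := by
    intro i
    have hmap := integral_map (φ := Y i) (f := fun x => Real.exp (t * x))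
      (hmeas i).aemeasurable
      (by rw [hdist i]; exact (measurable_const_mul t).exp.aestronglyMeasurable)
    rw [hdist i, integral_bern_s6 hq0.le hq1.le] at hmap
    unfold mgf
    rw [← hmap]
    simp
  have hmgf : mgf (∑ i, Y i) μ t = (q * Real.exp t + (1 - q)) ^ n := by
    rw [hindep.mgf_sum hmeas]
    simp [hmgf_i, Finset.prod_const, Finset.card_univ]
  -- identify the bound
  have hb : q * Real.exp t + (1 - q) = (1 - q) / (1 - a) := by
    rw [hexp]; field_simp; ring
  have hL : t = Real.log (a / q) + Real.log ((1 - q) / (1 - a)) := by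
    rw [ht_def, ← Real.log_mul (by positivity) (by positivity)]
    congr 1
    field_simp
  have hlog2 : Real.log ((1 - a) / (1 - q)) = - Real.log ((1 - q) / (1 - a)) := by
    rw [← Real.log_inv, inv_div]
  have hrhs : Real.exp (-t * (a * n)) * mgf (∑ i, Y i) μ t
      = Real.exp (-(n * klR a q)) := by
    rw [hmgf, hb, ← Real.exp_log (x := (1 - q) / (1 - a)) (by positivity),
      ← Real.exp_nat_mul, ← Real.exp_add]
    congr 1
    rw [klR, hlog2, hL]
    ring
  -- convert the event
  have hset : {ω | a ≤ (∑ i, Y i ω) / n} = {ω | a * n ≤ (∑ i, Y i) ω} := by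
    ext ω
    simp only [Set.mem_setOf_eq, Finset.sum_apply]
    rw [le_div_iff₀ hnR]
  rw [hset, ← hrhs]
  exact (ENNReal.le_ofReal_iff_toReal_le (measure_ne_top μ _)
    (mul_nonneg (Real.exp_nonneg _) mgf_nonneg)).mpr key
lemma bern_upper {Ω : Type*} [MeasurableSpace Ω] (μ : Measure Ω)
    [IsProbabilityMeasure μ] (n : ℕ) (hn : 0 < n) (q : ℝ) (hq : q ∈ Set.Ioo (0:ℝ) 1)
    (Y : Fin n → Ω → ℝ) (hmeas : ∀ i, Measurable (Y i))
    (hindep : iIndepFun Y μ)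
    (hdist : ∀ i, μ.map (Y i) = _root_.bernoulliMeasure q)
    (ε : ℝ) (hε : 0 < ε) :
    μ {ω | (∑ i, Y i ω) / n ∈ Set.Icc q 1 ∧ ε ≤ klR ((∑ i, Y i ω) / n) q} ≤
      ENNReal.ofReal (Real.exp (-(n * ε))) := by
  obtain ⟨hq0, hq1⟩ := hq
  have hnR : (0:ℝ) ≤ n := Nat.cast_nonneg n
  set A : Set ℝ := Set.Icc q 1 ∩ {t | ε ≤ klG q t} with hA
  have hAclosed : IsClosed A :=
    isClosed_Icc.inter (isClosed_le continuous_const (continuous_klG q))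
  have hsub : {ω | (∑ i, Y i ω) / n ∈ Set.Icc q 1 ∧ ε ≤ klR ((∑ i, Y i ω) / n) q}
      ⊆ {ω | (∑ i, Y i ω) / n ∈ A} := by
    intro ω hω
    exact ⟨hω.1, by
      rw [Set.mem_setOf_eq, ← klR_eq_klG hq0.ne' hq1.ne (hq0.le.trans hω.1.1) hω.1.2]
      exact hω.2⟩
  by_cases hne : A.Nonempty
  · have hbdd : BddBelow A := ⟨q, fun x hx => hx.1.1⟩
    have haA : sInf A ∈ A := hAclosed.csInf_mem hne hbdd
    set a := sInf A with ha_def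
    have haq : q ≤ a := haA.1.1
    have ha1 : a ≤ 1 := haA.1.2
    have haε : ε ≤ klG q a := haA.2
    have hsub2 : {ω | (∑ i, Y i ω) / n ∈ A} ⊆ {ω | a ≤ (∑ i, Y i ω) / n} :=
      fun ω hω => csInf_le hbdd hω
    have hmono : μ {ω | (∑ i, Y i ω) / n ∈ Set.Icc q 1 ∧ ε ≤ klR ((∑ i, Y i ω) / n) q} ≤
        μ {ω | a ≤ (∑ i, Y i ω) / n} := measure_mono (hsub.trans hsub2)
    rcases lt_or_eq_of_le ha1 with hlt | heq
    · refine hmono.trans ((bern_chernoff μ n hn q ⟨hq0, hq1⟩ Y hmeas hindep hdist a haq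
        hlt).trans (ENNReal.ofReal_le_ofReal (Real.exp_le_exp.2 ?_)))
      rw [klR_eq_klG hq0.ne' hq1.ne (hq0.le.trans haq) hlt.le]
      nlinarith
    · have hε' : ε ≤ klG q 1 := heq ▸ haε
      have hbound : ∀ b ∈ Set.Ioo q 1, μ {ω | a ≤ (∑ i, Y i ω) / n} ≤
          ENNReal.ofReal (Real.exp (-(n * klG q b))) := by
        intro b hb
        have hcb := bern_chernoff μ n hn q ⟨hq0, hq1⟩ Y hmeas hindep hdist b hb.1.le hb.2
        refine le_trans (measure_mono ?_) (hcb.trans_eq ?_)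
        · intro ω hω
          exact le_trans hb.2.le (heq ▸ hω)
        · rw [klR_eq_klG hq0.ne' hq1.ne (hq0.le.trans hb.1.le) hb.2.le]
      have htend : Filter.Tendsto (fun b => ENNReal.ofReal (Real.exp (-(n * klG q b))))
          (nhdsWithin 1 (Set.Iio 1)) (nhds (ENNReal.ofReal (Real.exp (-(n * klG q 1))))) :=
        ((ENNReal.continuous_ofReal.comp (Real.continuous_exp.comp
          ((continuous_const.mul (continuous_klG q)).neg))).tendsto 1).mono_left
          nhdsWithin_le_nhds
      have hev : ∀ᶠ b in nhdsWithin (1:ℝ) (Set.Iio 1),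
          μ {ω | a ≤ (∑ i, Y i ω) / n} ≤ ENNReal.ofReal (Real.exp (-(n * klG q b))) := by
        filter_upwards [Ioo_mem_nhdsLT_of_mem (⟨hq1, le_refl 1⟩ : (1:ℝ) ∈ Set.Ioc q 1)]
          with b hb using hbound b hb
      have hlim := ge_of_tendsto htend hev
      exact hmono.trans (hlim.trans (ENNReal.ofReal_le_ofReal (Real.exp_le_exp.2
        (by nlinarith))))
  · rw [Set.not_nonempty_iff_eq_empty] at hne
    have : {ω | (∑ i, Y i ω) / n ∈ A} = (∅ : Set Ω) := by
      simp [hne]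
    exact (measure_mono hsub).trans (by simp [this])

open MeasureTheory ProbabilityTheory in
/-- If `Y₁,…,Yₙ` are i.i.d. `Bernoulli(p)` with `p ∈ (0,1)` and `Ȳ := n⁻¹ ∑ᵢ Yᵢ`, then for
every `ε > 0`, `P(kl(Ȳ, p) ≥ ε) ≤ 2 exp(−nε)`. -/
theorem bernKL_concentration {Ω : Type*} [MeasurableSpace Ω] (μ : Measure Ω)
    [IsProbabilityMeasure μ] (n : ℕ) (hn : 0 < n) (p : ℝ) (hp : p ∈ Set.Ioo (0:ℝ) 1)
    (Y : Fin n → Ω → ℝ) (hmeas : ∀ i, Measurable (Y i))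
    (hindep : iIndepFun Y μ)
    (hdist : ∀ i, μ.map (Y i) = _root_.bernoulliMeasure p)
    (ε : ℝ) (hε : 0 < ε) :
    μ {ω | ((ε : ℝ) : EReal) ≤ bernKL ((∑ i, Y i ω) / n) p} ≤
      ENNReal.ofReal (2 * Real.exp (-(n * ε))) := by
  obtain ⟨hp0, hp1⟩ := hp
  have hnR : (0:ℝ) < n := by exact_mod_cast hn
  -- the complementary variables
  set Z : Fin n → Ω → ℝ := fun i ω => 1 - Y i ω with hZ
  have hZmeas : ∀ i, Measurable (Z i) := fun i => measurable_const.sub (hmeas i)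
  have hZindep : iIndepFun Z μ :=
    hindep.comp (fun _ (x : ℝ) => 1 - x) (fun _ => measurable_const.sub measurable_id)
  have hsubmeas : Measurable (fun x : ℝ => 1 - x) := measurable_const.sub measurable_id
  have hZdist : ∀ i, μ.map (Z i) = _root_.bernoulliMeasure (1 - p) := by
    intro i
    have hcomp : Z i = (fun x : ℝ => 1 - x) ∘ Y i := rfl
    rw [hcomp, ← Measure.map_map hsubmeas (hmeas i), hdist i]
    unfold _root_.bernoulliMeasure
    rw [Measure.map_add _ _ hsubmeas, Measure.map_smul, Measure.map_smul,
      Measure.map_dirac' hsubmeas, Measure.map_dirac' hsubmeas]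
    norm_num
    exact add_comm _ _
  -- the good event
  set G : Set Ω := {ω | ∀ i, Y i ω ∈ Set.Icc (0:ℝ) 1} with hG_def
  have hGc : μ Gᶜ = 0 := by
    have hsub : Gᶜ ⊆ ⋃ i, {ω | Y i ω ∈ (Set.Icc (0:ℝ) 1)ᶜ} := by
      intro ω hω
      simp only [hG_def, Set.mem_compl_iff, Set.mem_setOf_eq, not_forall] at hω
      obtain ⟨i, hi⟩ := hω
      exact Set.mem_iUnion.2 ⟨i, hi⟩
    refine le_antisymm ((measure_mono hsub).trans ?_) zero_le
    refine (measure_iUnion_le _).trans ?_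
    have hzero : ∀ i : Fin n, μ {ω | Y i ω ∈ (Set.Icc (0:ℝ) 1)ᶜ} = 0 := by
      intro i
      have hs : MeasurableSet ((Set.Icc (0:ℝ) 1)ᶜ) := measurableSet_Icc.compl
      have hmap : μ (Y i ⁻¹' (Set.Icc (0:ℝ) 1)ᶜ) = _root_.bernoulliMeasure p ((Set.Icc (0:ℝ) 1)ᶜ) := by
        rw [← Measure.map_apply (hmeas i) hs, hdist i]
      have : {ω | Y i ω ∈ (Set.Icc (0:ℝ) 1)ᶜ} = Y i ⁻¹' (Set.Icc (0:ℝ) 1)ᶜ := rfl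
      rw [this, hmap]
      unfold _root_.bernoulliMeasure
      simp only [Measure.coe_add, Pi.add_apply, Measure.coe_smul, Pi.smul_apply,
        Measure.dirac_apply' _ hs, smul_eq_mul]
      rw [Set.indicator_of_notMem (by simp), Set.indicator_of_notMem (by simp)]
      simp
    simp only [hzero, tsum_zero, le_refl]
  -- decomposition
  set E : Set Ω := {ω | ((ε : ℝ) : EReal) ≤ bernKL ((∑ i, Y i ω) / n) p} with hE_def
  set Eplus : Set Ω :=
    {ω | (∑ i, Y i ω) / n ∈ Set.Icc p 1 ∧ ε ≤ klR ((∑ i, Y i ω) / n) p} with hEp_def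
  set Eminus : Set Ω :=
    {ω | (∑ i, Z i ω) / n ∈ Set.Icc (1 - p) 1 ∧ ε ≤ klR ((∑ i, Z i ω) / n) (1 - p)}
    with hEm_def
  have hmain : μ E ≤ μ (E ∩ G) := by
    calc μ E ≤ μ ((E ∩ G) ∪ Gᶜ) := measure_mono (by
          intro ω hω
          by_cases h : ω ∈ G
          exacts [Or.inl ⟨hω, h⟩, Or.inr h])
      _ ≤ μ (E ∩ G) + μ Gᶜ := measure_union_le _ _
      _ = μ (E ∩ G) := by rw [hGc, add_zero]
  have hsplit : E ∩ G ⊆ Eplus ∪ Eminus := by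
    rintro ω ⟨hE, hG⟩
    have hY0 : 0 ≤ ∑ i, Y i ω := Finset.sum_nonneg fun i _ => (hG i).1
    have hYn : (∑ i, Y i ω) ≤ n := by
      calc ∑ i, Y i ω ≤ ∑ _i : Fin n, (1:ℝ) := Finset.sum_le_sum fun i _ => (hG i).2
        _ = n := by simp
    have hS0 : 0 ≤ (∑ i, Y i ω) / n := div_nonneg hY0 hnR.le
    have hS1 : (∑ i, Y i ω) / n ≤ 1 := (div_le_one hnR).2 hYn
    have hkl : ε ≤ klR ((∑ i, Y i ω) / n) p := by
      have h := hE
      rw [hE_def, Set.mem_setOf_eq, bernKL_eq ⟨hp0, hp1⟩, EReal.coe_le_coe_iff] at h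
      exact h
    by_cases hcase : p ≤ (∑ i, Y i ω) / n
    · exact Or.inl ⟨⟨hcase, hS1⟩, hkl⟩
    · push_neg at hcase
      have hZsum : (∑ i, Z i ω) / n = 1 - (∑ i, Y i ω) / n := by
        simp only [hZ]
        rw [Finset.sum_sub_distrib, Finset.sum_const, Finset.card_univ, Fintype.card_fin]
        field_simp
        rw [nsmul_eq_mul, mul_one]
      refine Or.inr ⟨?_, ?_⟩
      · rw [hZsum]
        exact ⟨by linarith, by linarith⟩
      · rw [hZsum, klR_symm]
        exact hkl
  have h1 := bern_upper μ n hn p ⟨hp0, hp1⟩ Y hmeas hindep hdist ε hε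
  have h2 := bern_upper μ n hn (1 - p) ⟨by linarith, by linarith⟩ Z hZmeas hZindep hZdist ε hε
  calc μ E ≤ μ (E ∩ G) := hmain
    _ ≤ μ (Eplus ∪ Eminus) := measure_mono hsplit
    _ ≤ μ Eplus + μ Eminus := measure_union_le _ _
    _ ≤ ENNReal.ofReal (Real.exp (-(n * ε))) + ENNReal.ofReal (Real.exp (-(n * ε))) :=
        add_le_add h1 h2
    _ = ENNReal.ofReal (2 * Real.exp (-(n * ε))) := by
        rw [← ENNReal.ofReal_add (Real.exp_nonneg _) (Real.exp_nonneg _), two_mul]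
end
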